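/- Let 1 < α ≤ 2 and let l be a non-negative integer. Let G(x,t) ≡ (4πt)^{-1/2} e^{-x²/4t} denote the heat kernel. Then there exists a constant C > 0 such that for all t ≥ 1 and all x ∈ ℝ: ∫_ℝ |∂ₓˡ G(x−y, t)| (1+|y|)^{-(α-1)} dy ≤ C(1+t)^{-(α-1)/2 − l/2} when 1 < α < 2, and ∫_ℝ |∂ₓˡ G(x−y, t)| (1+|y|)^{-(α-1)} dy ≤ C(1+t)^{-1/2 − l/2} log(2+t) when α = 2. -/

import Mathlib

open MeasureTheory Real Filter intervalIntegral

noncomputable section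

/-- Green function `S(x,t)` of the linearized generalized KdV–Burgers equation:
the inverse Fourier transform (in the convention `𝓕⁻¹[g](x) = (2π)^{-1/2} ∫ e^{ixξ} g(ξ) dξ`)
of `ξ ↦ exp(-t ξ² + i t k ξ³)`. -/
def greenS (k t x : ℝ) : ℂ :=
  ((Real.sqrt (2 * Real.pi) : ℝ) : ℂ)⁻¹ *
    ∫ ξ : ℝ, Complex.exp (Complex.I * x * ξ) *
      Complex.exp (-(t : ℂ) * ξ ^ 2 + Complex.I * t * k * ξ ^ 3)

/-- Self-similar profile `χ_*` with mass `δ`. -/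
def chiStar (b δ x : ℝ) : ℝ :=
  (1 / b) * ((Real.exp (b * δ / 2) - 1) * Real.exp (-x ^ 2 / 4)) /
    (Real.sqrt Real.pi + (Real.exp (b * δ / 2) - 1) * ∫ y in Set.Ioi (x / 2), Real.exp (-y ^ 2))

/-- Nonlinear diffusion wave `χ(x,t) = (1+t)^{-1/2} χ_*(x/√(1+t))`. -/
def chi (b δ t x : ℝ) : ℝ := (1 + t) ^ (-(1 : ℝ) / 2) * chiStar b δ (x / Real.sqrt (1 + t))

/-- `η_*(x) = exp((b/2)∫_{-∞}^x χ_*(y) dy)`. -/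
def etaStar (b δ x : ℝ) : ℝ := Real.exp ((b / 2) * ∫ y in Set.Iio x, chiStar b δ y)

/-- `η(x,t) = η_*(x/√(1+t)) = exp((b/2)∫_{-∞}^x χ(y,t) dy)`. -/
def etaFun (b δ t x : ℝ) : ℝ := etaStar b δ (x / Real.sqrt (1 + t))

/-- Heat kernel `G(x,t)`. -/
def heatG (t x : ℝ) : ℝ := (Real.sqrt (4 * Real.pi * t))⁻¹ * Real.exp (-x ^ 2 / (4 * t))

/-- `U[h](x,t,τ) = ∫ ∂ₓ(G(x−y,t−τ)η(x,t)) η(y,τ)⁻¹ (∫_{-∞}^y h) dy`. -/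
def Uker (b δ : ℝ) (h : ℝ → ℝ) (x t τ : ℝ) : ℝ :=
  ∫ y : ℝ, deriv (fun x' => heatG (t - τ) (x' - y) * etaFun b δ t x') x *
    (etaFun b δ τ y)⁻¹ * ∫ ξ in Set.Iio y, h ξ

/-- Second asymptotic profile `Z(x,t)` with constants `cp = c_α⁺`, `cm = c_α⁻`. -/
def Zprof (b δ cp cm α : ℝ) (t x : ℝ) : ℝ :=
  ∫ y : ℝ, (if 0 ≤ y then cp else cm) *
    deriv (fun x' => heatG t (x' - y) * etaFun b δ t x') x * (1 + |y|) ^ (-(α - 1))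

/-- `d = ∫ η_*(y)⁻¹ χ_*(y)³ dy`. -/
def dConst (b δ : ℝ) : ℝ := ∫ y : ℝ, (etaStar b δ y)⁻¹ * (chiStar b δ y) ^ 3

/-- `V_*(x) = (bχ_*(x) − x)e^{-x²/4} η_*(x)`. -/
def Vstar (b δ x : ℝ) : ℝ := (b * chiStar b δ x - x) * Real.exp (-x ^ 2 / 4) * etaStar b δ x

/-- Second asymptotic profile `V(x,t)`. -/
def Vprof (b c k δ t x : ℝ) : ℝ :=
  -(dConst b δ / (4 * Real.sqrt Real.pi)) * (b ^ 2 * k / 8 + c / 3) *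
    Vstar b δ (x / Real.sqrt (1 + t)) * (1 + t)⁻¹ * Real.log (1 + t)

/-- The mild (Duhamel) formulation of the generalized KdV–Burgers equation
`u_t + ((b/2)u² + (c/3)u³)_x + k u_{xxx} = u_{xx}`, `u(·,0) = u₀`. -/
def IsMildSolution (b c k : ℝ) (u₀ : ℝ → ℝ) (u : ℝ → ℝ → ℝ) : Prop :=
  (∀ x, u 0 x = u₀ x) ∧
  ∀ t > (0 : ℝ), ∀ x : ℝ,
    (u t x : ℂ) = (∫ y : ℝ, greenS k t (x - y) * (u₀ y : ℂ)) -
      ∫ τ in (0 : ℝ)..t, ∫ y : ℝ,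
        deriv (fun z => greenS k (t - τ) z) (x - y) *
          ((b / 2 : ℂ) * (u τ y : ℂ) ^ 2 + (c / 3 : ℂ) * (u τ y : ℂ) ^ 3)

/-- A global solution of the generalized KdV–Burgers equation in `C⁰([0,∞); Hˢ)`. -/
def IsGlobalSolution (s : ℕ) (b c k : ℝ) (u₀ : ℝ → ℝ) (u : ℝ → ℝ → ℝ) : Prop :=
  (∀ t, 0 ≤ t → ContDiff ℝ s (u t) ∧ ∀ j ≤ s, MemLp (iteratedDeriv j (u t)) 2 volume) ∧
  Continuous (fun p : ℝ × ℝ => u p.1 p.2) ∧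
  IsMildSolution b c k u₀ u

/-- `w₀(x) = exp(−(b/2)∫_{-∞}^x u₀) − exp(−(b/2)∫_{-∞}^x χ_*)`, with `δ = ∫ u₀`. -/
def w0 (b : ℝ) (u₀ : ℝ → ℝ) (x : ℝ) : ℝ :=
  Real.exp (-(b / 2) * ∫ y in Set.Iio x, u₀ y) -
    Real.exp (-(b / 2) * ∫ y in Set.Iio x, chiStar b (∫ z : ℝ, u₀ z) y)

/-- `w(x,t) = exp(−(b/2)∫_{-∞}^x u(y,t)dy) − η(x,t)⁻¹`, with `δ = ∫ u₀`. -/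
def wFun (b : ℝ) (u₀ : ℝ → ℝ) (u : ℝ → ℝ → ℝ) (t x : ℝ) : ℝ :=
  Real.exp (-(b / 2) * ∫ y in Set.Iio x, u t y) - (etaFun b (∫ y : ℝ, u₀ y) t x)⁻¹

end

namespace Stmt11Aux

open Polynomial MeasureTheory Real

noncomputable def herm (l : ℕ) (u : ℝ) : ℝ :=
  (-1 : ℝ) ^ l * aeval u (hermite l) * Real.exp (-(u ^ 2 / 2))

lemma herm_eq (l : ℕ) (u : ℝ) :
    deriv^[l] (fun y => Real.exp (-(y ^ 2 / 2))) u = herm l u :=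
  Polynomial.deriv_gaussian_eq_hermite_mul_gaussian l u

lemma herm_differentiable (l : ℕ) : Differentiable ℝ (herm l) := by
  apply Differentiable.mul
  · exact (differentiable_const _).mul (Polynomial.differentiable_aeval _)
  · exact (((differentiable_pow 2).div_const 2).neg).exp

lemma herm_hasDerivAt (l : ℕ) (u : ℝ) : HasDerivAt (herm l) (herm (l + 1) u) u := by
  have h1 : herm l = deriv^[l] (fun y => Real.exp (-(y ^ 2 / 2))) :=
    funext fun v => (herm_eq l v).symm
  have h2 : deriv (herm l) u = herm (l + 1) u := by
    conv_lhs => rw [h1]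
    rw [← Function.iterate_succ_apply' deriv l]
    exact herm_eq (l + 1) u
  rw [← h2]
  exact (herm_differentiable l u).hasDerivAt

lemma abs_pow_le_exp (u : ℝ) (i : ℕ) :
    |u| ^ i ≤ (1 + 4 ^ i * (i.factorial : ℝ)) * Real.exp (u ^ 2 / 4) := by
  have he : (1 : ℝ) ≤ Real.exp (u ^ 2 / 4) := Real.one_le_exp (by positivity)
  have hfac : (0 : ℝ) < (i.factorial : ℝ) := by exact_mod_cast i.factorial_pos
  have h4 : (0 : ℝ) < 4 ^ i := pow_pos (by norm_num) i
  rcases le_total (|u|) 1 with h | h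
  · have h1 : |u| ^ i ≤ 1 := pow_le_one₀ (abs_nonneg u) h
    nlinarith [mul_pos h4 hfac]
  · have h1 : |u| ^ i ≤ (u ^ 2) ^ i := by
      have hu2 : |u| ≤ |u| ^ 2 := by nlinarith
      calc |u| ^ i ≤ (|u| ^ 2) ^ i := pow_le_pow_left₀ (abs_nonneg u) hu2 i
        _ = (u ^ 2) ^ i := by rw [sq_abs]
    have h2 := Real.pow_div_factorial_le_exp (u ^ 2 / 4) (by positivity) i
    rw [div_pow] at h2
    have h3 : (u ^ 2) ^ i ≤ 4 ^ i * (i.factorial : ℝ) * Real.exp (u ^ 2 / 4) := by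
      rw [div_div] at h2
      calc (u ^ 2) ^ i = (u ^ 2) ^ i / (4 ^ i * (i.factorial : ℝ)) * (4 ^ i * (i.factorial : ℝ)) := by
            field_simp
        _ ≤ Real.exp (u ^ 2 / 4) * (4 ^ i * (i.factorial : ℝ)) :=
            mul_le_mul_of_nonneg_right h2 (by positivity)
        _ = 4 ^ i * (i.factorial : ℝ) * Real.exp (u ^ 2 / 4) := by ring
    nlinarith [Real.exp_pos (u ^ 2 / 4)]

lemma aeval_bound (p : Polynomial ℤ) :
    ∃ M > 0, ∀ u : ℝ, |aeval u p| ≤ M * Real.exp (u ^ 2 / 4) := by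
  refine ⟨(∑ i ∈ Finset.range (p.natDegree + 1), |((p.coeff i : ℝ))| * (1 + 4 ^ i * (i.factorial : ℝ)))
      + 1, ?_, fun u => ?_⟩
  · have : (0:ℝ) ≤ ∑ i ∈ Finset.range (p.natDegree + 1),
        |((p.coeff i : ℝ))| * (1 + 4 ^ i * (i.factorial : ℝ)) := by
      apply Finset.sum_nonneg
      intro i _
      have : (0:ℝ) < (i.factorial : ℝ) := by exact_mod_cast i.factorial_pos
      positivity
    linarith
  · have he : (0 : ℝ) < Real.exp (u ^ 2 / 4) := Real.exp_pos _
    have h0 : (aeval u p : ℝ) = ∑ i ∈ Finset.range (p.natDegree + 1),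
        ((p.coeff i : ℝ)) * u ^ i := by
      rw [Polynomial.aeval_eq_sum_range]
      exact Finset.sum_congr rfl fun i _ => by rw [zsmul_eq_mul]
    rw [h0]
    calc |∑ i ∈ Finset.range (p.natDegree + 1), ((p.coeff i : ℝ)) * u ^ i|
        ≤ ∑ i ∈ Finset.range (p.natDegree + 1), |((p.coeff i : ℝ)) * u ^ i| :=
          Finset.abs_sum_le_sum_abs _ _
      _ = ∑ i ∈ Finset.range (p.natDegree + 1), |((p.coeff i : ℝ))| * |u| ^ i :=
          Finset.sum_congr rfl fun i _ => by rw [abs_mul, abs_pow]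
      _ ≤ ∑ i ∈ Finset.range (p.natDegree + 1),
            |((p.coeff i : ℝ))| * ((1 + 4 ^ i * (i.factorial : ℝ)) * Real.exp (u ^ 2 / 4)) := by
          apply Finset.sum_le_sum
          intro i _
          exact mul_le_mul_of_nonneg_left (abs_pow_le_exp u i) (abs_nonneg _)
      _ = (∑ i ∈ Finset.range (p.natDegree + 1),
            |((p.coeff i : ℝ))| * (1 + 4 ^ i * (i.factorial : ℝ))) * Real.exp (u ^ 2 / 4) := by
          rw [Finset.sum_mul]
          exact Finset.sum_congr rfl fun i _ => by ring
      _ ≤ _ := by nlinarith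

lemma herm_bound (l : ℕ) :
    ∃ M > 0, ∀ u : ℝ, |herm l u| ≤ M * Real.exp (-(u ^ 2 / 4)) := by
  obtain ⟨M, hM, h⟩ := aeval_bound (hermite l)
  refine ⟨M, hM, fun u => ?_⟩
  have h1 : |herm l u| = |aeval u (hermite l)| * Real.exp (-(u ^ 2 / 2)) := by
    rw [herm, abs_mul, abs_mul, abs_pow, abs_neg, abs_one, one_pow, one_mul, Real.abs_exp]
  rw [h1]
  calc |aeval u (hermite l)| * Real.exp (-(u ^ 2 / 2))
      ≤ M * Real.exp (u ^ 2 / 4) * Real.exp (-(u ^ 2 / 2)) :=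
        mul_le_mul_of_nonneg_right (h u) (Real.exp_nonneg _)
    _ = M * Real.exp (-(u ^ 2 / 4)) := by
        rw [mul_assoc, ← Real.exp_add]
        ring_nf

lemma heatG_iteratedDeriv (t : ℝ) (ht : 0 < t) (y : ℝ) (l : ℕ) (x : ℝ) :
    iteratedDeriv l (fun x' => heatG t (x' - y)) x =
      (Real.sqrt (4 * Real.pi * t))⁻¹ * ((Real.sqrt (2 * t))⁻¹) ^ l *
        herm l ((x - y) / Real.sqrt (2 * t)) := by
  have h2t : (0:ℝ) < 2 * t := by linarith
  have hs : (0:ℝ) < Real.sqrt (2 * t) := Real.sqrt_pos.mpr h2t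
  induction l generalizing x with
  | zero =>
    simp only [iteratedDeriv_zero, pow_zero, mul_one, heatG, herm]
    rw [Polynomial.hermite_zero]
    simp only [map_one, pow_zero, one_mul, mul_one]
    congr 1
    rw [div_pow, Real.sq_sqrt h2t.le]
    ring
  | succ l ih =>
    rw [iteratedDeriv_succ]
    have hfun : iteratedDeriv l (fun x' => heatG t (x' - y)) =
        fun x => (Real.sqrt (4 * Real.pi * t))⁻¹ * ((Real.sqrt (2 * t))⁻¹) ^ l *
          herm l ((x - y) / Real.sqrt (2 * t)) := funext ih
    rw [hfun]
    have hinner : HasDerivAt (fun x : ℝ => (x - y) / Real.sqrt (2 * t))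
        ((Real.sqrt (2 * t))⁻¹) x := by
      simpa [one_div] using ((hasDerivAt_id x).sub_const y).div_const (Real.sqrt (2 * t))
    have hcomp : HasDerivAt (fun x : ℝ => herm l ((x - y) / Real.sqrt (2 * t)))
        (herm (l + 1) ((x - y) / Real.sqrt (2 * t)) * (Real.sqrt (2 * t))⁻¹) x :=
      by have h := (herm_hasDerivAt l ((x - y) / Real.sqrt (2 * t))).comp x hinner; exact h
    have hd := ((hcomp.const_mul
      ((Real.sqrt (4 * Real.pi * t))⁻¹ * ((Real.sqrt (2 * t))⁻¹) ^ l)))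
    rw [hd.deriv]
    ring

lemma heatG_abs_bound (l : ℕ) : ∃ M > 0, ∀ t : ℝ, 1 ≤ t → ∀ x y : ℝ,
    |iteratedDeriv l (fun x' => heatG t (x' - y)) x| ≤
      M * t ^ (-(1 + (l : ℝ)) / 2) * Real.exp (-((x - y) ^ 2 / (8 * t))) := by
  obtain ⟨M, hM, hb⟩ := herm_bound l
  refine ⟨M, hM, fun t ht x y => ?_⟩
  have ht0 : (0:ℝ) < t := lt_of_lt_of_le one_pos ht
  have h2t : (0:ℝ) < 2 * t := by linarith
  have hst : (0:ℝ) < Real.sqrt t := Real.sqrt_pos.mpr ht0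
  rw [heatG_iteratedDeriv t ht0 y l x, abs_mul, abs_mul,
    abs_of_nonneg (show (0:ℝ) ≤ (Real.sqrt (4 * Real.pi * t))⁻¹ by positivity),
    abs_of_nonneg (show (0:ℝ) ≤ ((Real.sqrt (2 * t))⁻¹) ^ l by positivity)]
  have e1 : (Real.sqrt (4 * Real.pi * t))⁻¹ ≤ (Real.sqrt t)⁻¹ := by
    apply inv_anti₀ hst
    apply Real.sqrt_le_sqrt
    nlinarith [Real.pi_gt_three]
  have e2 : ((Real.sqrt (2 * t))⁻¹) ^ l ≤ ((Real.sqrt t)⁻¹) ^ l := by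
    apply pow_le_pow_left₀ (by positivity)
    apply inv_anti₀ hst
    apply Real.sqrt_le_sqrt
    linarith
  have hz : ((x - y) / Real.sqrt (2 * t)) ^ 2 / 4 = (x - y) ^ 2 / (8 * t) := by
    rw [div_pow, Real.sq_sqrt h2t.le]
    ring
  have e3 : |herm l ((x - y) / Real.sqrt (2 * t))| ≤
      M * Real.exp (-((x - y) ^ 2 / (8 * t))) := by
    have := hb ((x - y) / Real.sqrt (2 * t))
    rwa [hz] at this
  have e5 : (Real.sqrt t)⁻¹ * ((Real.sqrt t)⁻¹) ^ l = t ^ (-(1 + (l : ℝ)) / 2) := by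
    rw [Real.sqrt_eq_rpow, ← Real.rpow_neg ht0.le, ← Real.rpow_natCast (t ^ (-(1/2) : ℝ)) l,
      ← Real.rpow_mul ht0.le, ← Real.rpow_add ht0]
    congr 1
    ring
  calc (Real.sqrt (4 * Real.pi * t))⁻¹ * ((Real.sqrt (2 * t))⁻¹) ^ l *
        |herm l ((x - y) / Real.sqrt (2 * t))|
      ≤ (Real.sqrt t)⁻¹ * ((Real.sqrt t)⁻¹) ^ l * (M * Real.exp (-((x - y) ^ 2 / (8 * t)))) := by
        apply mul_le_mul
        · exact mul_le_mul e1 e2 (by positivity) (by positivity)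
        · exact e3
        · exact abs_nonneg _
        · positivity
    _ = M * t ^ (-(1 + (l : ℝ)) / 2) * Real.exp (-((x - y) ^ 2 / (8 * t))) := by
        rw [e5]; ring

lemma rpow_one_add_le (t : ℝ) (ht : 1 ≤ t) (a : ℝ) (ha : a ≤ 0) :
    t ^ a ≤ 2 ^ (-a) * (1 + t) ^ a := by
  have ht0 : (0:ℝ) < t := by linarith
  calc t ^ a = 2 ^ (-a) * (2 ^ a * t ^ a) := by
        rw [← mul_assoc, ← Real.rpow_add (by norm_num : (0:ℝ) < 2)]
        simp
    _ = 2 ^ (-a) * (2 * t) ^ a := by rw [Real.mul_rpow (by norm_num) ht0.le]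
    _ ≤ 2 ^ (-a) * (1 + t) ^ a := by
        apply mul_le_mul_of_nonneg_left _ (Real.rpow_nonneg (by norm_num) _)
        exact Real.rpow_le_rpow_of_nonpos (by linarith) (by linarith) ha

set_option maxHeartbeats 1000000 in
lemma key (β : ℝ) (hβ0 : 0 < β) (hβ1 : β ≤ 1) (l : ℕ) :
    ∃ M > 0, ∀ t : ℝ, 1 ≤ t → ∀ x : ℝ,
      (∫ y : ℝ, |iteratedDeriv l (fun x' => heatG t (x' - y)) x| * (1 + |y|) ^ (-β)) ≤
        M * t ^ (-(1 + (l : ℝ)) / 2) *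
          (2 * (∫ u in (0:ℝ)..Real.sqrt t, (1 + u) ^ (-β)) +
            Real.sqrt (Real.pi * 8) * Real.sqrt t * (1 + Real.sqrt t) ^ (-β)) := by
  obtain ⟨M, hM, hb⟩ := heatG_abs_bound l
  refine ⟨M, hM, fun t ht x => ?_⟩
  have ht0 : (0:ℝ) < t := lt_of_lt_of_le one_pos ht
  have hs0 : (0:ℝ) < Real.sqrt t := Real.sqrt_pos.mpr ht0
  set s : ℝ := Real.sqrt t with hsdef
  set w : ℝ → ℝ := fun y => (1 + |y|) ^ (-β) with hwdef
  set E : ℝ → ℝ := fun y => Real.exp (-((x - y) ^ 2 / (8 * t))) with hEdef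
  have hw0 : ∀ y, 0 ≤ w y := fun y => Real.rpow_nonneg (by positivity) _
  have hw1 : ∀ y, w y ≤ 1 := fun y =>
    Real.rpow_le_one_of_one_le_of_nonpos (by linarith [abs_nonneg y]) (by linarith)
  have hwc : Continuous w := by
    apply Continuous.rpow_const (continuous_const.add continuous_abs)
    intro y; left; exact (show (0:ℝ) < 1 + |y| by positivity).ne'
  have hE0 : ∀ y, 0 ≤ E y := fun y => Real.exp_nonneg _
  have hE1 : ∀ y, E y ≤ 1 := fun y => Real.exp_le_one_iff.mpr (by
    have : (0:ℝ) ≤ (x - y) ^ 2 / (8 * t) := by positivity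
    linarith)
  have hEeq : E = fun y => Real.exp (-(8 * t)⁻¹ * (y - x) ^ 2) := by
    funext y
    show Real.exp (-((x - y) ^ 2 / (8 * t))) = Real.exp (-(8 * t)⁻¹ * (y - x) ^ 2)
    exact congrArg Real.exp (by ring)
  have hEi : Integrable E := by
    rw [hEeq]
    exact (integrable_exp_neg_mul_sq (by positivity)).comp_sub_right x
  have hprod : Integrable (fun y => w y * E y) :=
    hEi.bdd_mul hwc.aestronglyMeasurable (c := 1)
      (Filter.Eventually.of_forall fun y => by rw [Real.norm_eq_abs, abs_of_nonneg (hw0 y)]; exact hw1 y)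
  have step1 : (∫ y : ℝ, |iteratedDeriv l (fun x' => heatG t (x' - y)) x| * (1 + |y|) ^ (-β))
      ≤ ∫ y : ℝ, M * t ^ (-(1 + (l : ℝ)) / 2) * (w y * E y) := by
    apply integral_mono_of_nonneg
    · exact Filter.Eventually.of_forall fun y => by positivity
    · exact hprod.const_mul _
    · apply Filter.Eventually.of_forall
      intro y
      calc |iteratedDeriv l (fun x' => heatG t (x' - y)) x| * (1 + |y|) ^ (-β)
          ≤ M * t ^ (-(1 + (l : ℝ)) / 2) * Real.exp (-((x - y) ^ 2 / (8 * t))) * w y :=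
            mul_le_mul_of_nonneg_right (hb t ht x y) (hw0 y)
        _ = M * t ^ (-(1 + (l : ℝ)) / 2) * (w y * E y) := by rw [hEdef]; ring
  rw [MeasureTheory.integral_const_mul] at step1
  have hsplit : (∫ y : ℝ, w y * E y) =
      (∫ y in Set.Ioc (-s) s, w y * E y) + ∫ y in (Set.Ioc (-s) s)ᶜ, w y * E y :=
    (integral_add_compl measurableSet_Ioc hprod).symm
  have hinner : (∫ y in Set.Ioc (-s) s, w y * E y) ≤ 2 * ∫ u in (0:ℝ)..s, (1 + u) ^ (-β) := by
    have h1 : (∫ y in Set.Ioc (-s) s, w y * E y) ≤ ∫ y in Set.Ioc (-s) s, w y := by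
      apply setIntegral_mono_on hprod.integrableOn hwc.integrableOn_Ioc measurableSet_Ioc
      intro y _
      exact mul_le_of_le_one_right (hw0 y) (hE1 y)
    have h2 : (∫ y in Set.Ioc (-s) s, w y) = ∫ y in (-s)..s, w y :=
      (intervalIntegral.integral_of_le (by linarith)).symm
    have h3 : (∫ y in (-s)..(0:ℝ), w y) = ∫ y in (0:ℝ)..s, w y := by
      have hn := intervalIntegral.integral_comp_neg (a := 0) (b := s) w
      simp only [neg_zero] at hn
      rw [← hn]
      apply intervalIntegral.integral_congr
      intro u _
      simp [hwdef, abs_neg]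
    have h4 : (∫ y in (0:ℝ)..s, w y) = ∫ u in (0:ℝ)..s, (1 + u) ^ (-β) := by
      apply intervalIntegral.integral_congr
      intro u hu
      rw [Set.uIcc_of_le hs0.le] at hu
      simp [hwdef, abs_of_nonneg hu.1]
    have h5 : (∫ y in (-s)..s, w y) = 2 * ∫ u in (0:ℝ)..s, (1 + u) ^ (-β) := by
      rw [← intervalIntegral.integral_add_adjacent_intervals (a := -s) (b := 0) (c := s)
        (hwc.intervalIntegrable _ _) (hwc.intervalIntegrable _ _), h3, h4]
      ring
    rw [h2, h5] at h1
    exact h1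
  have houter : (∫ y in (Set.Ioc (-s) s)ᶜ, w y * E y) ≤
      Real.sqrt (Real.pi * 8) * s * (1 + s) ^ (-β) := by
    have h1 : (∫ y in (Set.Ioc (-s) s)ᶜ, w y * E y) ≤
        ∫ y in (Set.Ioc (-s) s)ᶜ, (1 + s) ^ (-β) * E y := by
      apply setIntegral_mono_on hprod.integrableOn (hEi.const_mul _).integrableOn
        measurableSet_Ioc.compl
      intro y hy
      simp only [Set.mem_compl_iff, Set.mem_Ioc, not_and, not_le] at hy
      have hys : s ≤ |y| := by
        rcases le_or_gt y (-s) with h | h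
        · calc s ≤ -y := by linarith
            _ ≤ |y| := neg_le_abs y
        · have h2 : s < y := hy h
          calc s ≤ y := h2.le
            _ ≤ |y| := le_abs_self y
      apply mul_le_mul_of_nonneg_right _ (hE0 y)
      exact Real.rpow_le_rpow_of_nonpos (by linarith) (by linarith) (by linarith)
    rw [MeasureTheory.integral_const_mul] at h1
    have h3 : (∫ y in (Set.Ioc (-s) s)ᶜ, E y) ≤ ∫ y, E y :=
      setIntegral_le_integral hEi (Filter.Eventually.of_forall hE0)
    have h4 : (∫ y, E y) = Real.sqrt (Real.pi * 8) * s := by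
      rw [hEeq, integral_sub_right_eq_self (fun y => Real.exp (-(8 * t)⁻¹ * y ^ 2)) x,
        integral_gaussian, show Real.pi / (8 * t)⁻¹ = (Real.pi * 8) * t by field_simp,
        Real.sqrt_mul (by positivity)]
    calc (∫ y in (Set.Ioc (-s) s)ᶜ, w y * E y)
        ≤ (1 + s) ^ (-β) * ∫ y in (Set.Ioc (-s) s)ᶜ, E y := h1
      _ ≤ (1 + s) ^ (-β) * (Real.sqrt (Real.pi * 8) * s) := by
          rw [← h4]
          exact mul_le_mul_of_nonneg_left h3 (Real.rpow_nonneg (by positivity) _)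
      _ = Real.sqrt (Real.pi * 8) * s * (1 + s) ^ (-β) := by ring
  calc (∫ y : ℝ, |iteratedDeriv l (fun x' => heatG t (x' - y)) x| * (1 + |y|) ^ (-β))
      ≤ M * t ^ (-(1 + (l : ℝ)) / 2) * ∫ y : ℝ, w y * E y := step1
    _ = M * t ^ (-(1 + (l : ℝ)) / 2) *
        ((∫ y in Set.Ioc (-s) s, w y * E y) + ∫ y in (Set.Ioc (-s) s)ᶜ, w y * E y) := by
        rw [hsplit]
    _ ≤ M * t ^ (-(1 + (l : ℝ)) / 2) *
        (2 * (∫ u in (0:ℝ)..s, (1 + u) ^ (-β)) +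
          Real.sqrt (Real.pi * 8) * s * (1 + s) ^ (-β)) := by
        apply mul_le_mul_of_nonneg_left (add_le_add hinner houter) (by positivity)

end Stmt11Aux


/-- Estimate (3-11): heat-kernel convolution with a slowly decaying weight. -/
theorem stmt11 (α : ℝ) (hα1 : 1 < α) (hα2 : α ≤ 2) (l : ℕ) :
    ∃ C > (0 : ℝ), ∀ t : ℝ, 1 ≤ t → ∀ x : ℝ,
      (α < 2 →
        (∫ y : ℝ, |iteratedDeriv l (fun x' => heatG t (x' - y)) x| * (1 + |y|) ^ (-(α - 1))) ≤
          C * (1 + t) ^ (-(α - 1) / 2 - (l : ℝ) / 2)) ∧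
      (α = 2 →
        (∫ y : ℝ, |iteratedDeriv l (fun x' => heatG t (x' - y)) x| * (1 + |y|) ^ (-(α - 1))) ≤
          C * (1 + t) ^ (-(1 : ℝ) / 2 - (l : ℝ) / 2) * Real.log (2 + t)) := by
  rcases lt_or_eq_of_le hα2 with hlt | heq
  · -- case α < 2
    have h2α : (0:ℝ) < 2 - α := by linarith
    obtain ⟨M, hM, hkey⟩ := Stmt11Aux.key (α - 1) (by linarith) (by linarith) l
    refine ⟨M * (4 / (2 - α) + Real.sqrt (Real.pi * 8)) * 2 ^ ((α - 1) / 2 + (l : ℝ) / 2),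
      ?_, fun t ht x => ?_⟩
    · exact mul_pos (mul_pos hM
        (add_pos_of_pos_of_nonneg (div_pos (by norm_num) h2α) (Real.sqrt_nonneg _)))
        (Real.rpow_pos_of_pos (by norm_num) _)
    constructor
    · intro _
      have ht0 : (0:ℝ) < t := lt_of_lt_of_le one_pos ht
      have hs0 : (0:ℝ) < Real.sqrt t := Real.sqrt_pos.mpr ht0
      have hs1 : (1:ℝ) ≤ Real.sqrt t := by
        rw [show (1:ℝ) = Real.sqrt 1 by simp]
        exact Real.sqrt_le_sqrt ht
      have hs12 : Real.sqrt t = t ^ ((1:ℝ)/2) := Real.sqrt_eq_rpow t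
      have hsa : ∀ a : ℝ, (Real.sqrt t) ^ a = t ^ (a / 2) := by
        intro a
        rw [hs12, ← Real.rpow_mul ht0.le]
        congr 1
        ring
      have hshift : (∫ u in (0:ℝ)..(Real.sqrt t), (1 + u) ^ (-(α - 1))) =
          ∫ u in (1:ℝ)..(1 + Real.sqrt t), u ^ (-(α - 1)) := by
        have h := intervalIntegral.integral_comp_add_left (a := 0) (b := Real.sqrt t)
          (fun u : ℝ => u ^ (-(α - 1))) 1
        simpa using h
      have heval : (∫ u in (1:ℝ)..(1 + Real.sqrt t), u ^ (-(α - 1))) =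
          ((1 + Real.sqrt t) ^ (-(α - 1) + 1) - 1 ^ (-(α - 1) + 1)) / (-(α - 1) + 1) :=
        integral_rpow (Or.inl (by linarith))
      have e1 : (1 + Real.sqrt t) ^ (2 - α) ≤ 2 * (Real.sqrt t) ^ (2 - α) := by
        calc (1 + Real.sqrt t) ^ (2 - α) ≤ (2 * Real.sqrt t) ^ (2 - α) :=
              Real.rpow_le_rpow (by positivity) (by linarith) (by linarith)
          _ = 2 ^ (2 - α) * (Real.sqrt t) ^ (2 - α) := Real.mul_rpow (by norm_num) hs0.le
          _ ≤ 2 * (Real.sqrt t) ^ (2 - α) := by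
              apply mul_le_mul_of_nonneg_right _ (Real.rpow_nonneg hs0.le _)
              calc (2:ℝ) ^ (2 - α) ≤ 2 ^ (1:ℝ) :=
                    Real.rpow_le_rpow_of_exponent_le one_le_two (by linarith)
                _ = 2 := Real.rpow_one 2
      have hIb : (∫ u in (0:ℝ)..(Real.sqrt t), (1 + u) ^ (-(α - 1))) ≤
          2 * (Real.sqrt t) ^ (2 - α) / (2 - α) := by
        rw [hshift, heval, Real.one_rpow, show -(α - 1) + 1 = 2 - α by ring]
        apply (div_le_div_iff_of_pos_right h2α).mpr
        linarith
      have e2 : (1 + Real.sqrt t) ^ (-(α - 1)) ≤ (Real.sqrt t) ^ (-(α - 1)) :=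
        Real.rpow_le_rpow_of_nonpos hs0 (by linarith) (by linarith)
      have m1 : t ^ (-(1 + (l:ℝ)) / 2) * t ^ ((2 - α) / 2) =
          t ^ (-(α - 1) / 2 - (l : ℝ) / 2) := by
        rw [← Real.rpow_add ht0]
        congr 1
        ring
      have m2 : t ^ (-(1 + (l:ℝ)) / 2) * (t ^ ((1:ℝ)/2) * t ^ (-(α - 1) / 2)) =
          t ^ (-(α - 1) / 2 - (l : ℝ) / 2) := by
        rw [← Real.rpow_add ht0, ← Real.rpow_add ht0]
        congr 1
        ring
      have hpow : t ^ (-(α - 1) / 2 - (l : ℝ) / 2) ≤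
          2 ^ ((α - 1) / 2 + (l : ℝ) / 2) * (1 + t) ^ (-(α - 1) / 2 - (l : ℝ) / 2) := by
        have h := Stmt11Aux.rpow_one_add_le t ht (-(α - 1) / 2 - (l : ℝ) / 2) (by
          have hl : (0:ℝ) ≤ (l:ℝ) := Nat.cast_nonneg l
          linarith)
        rwa [show -(-(α - 1) / 2 - (l : ℝ) / 2) = (α - 1) / 2 + (l : ℝ) / 2 by ring] at h
      calc (∫ y : ℝ, |iteratedDeriv l (fun x' => heatG t (x' - y)) x| * (1 + |y|) ^ (-(α - 1)))
          ≤ M * t ^ (-(1 + (l : ℝ)) / 2) *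
            (2 * (∫ u in (0:ℝ)..(Real.sqrt t), (1 + u) ^ (-(α - 1))) +
              Real.sqrt (Real.pi * 8) * Real.sqrt t * (1 + Real.sqrt t) ^ (-(α - 1))) :=
            hkey t ht x
        _ ≤ M * t ^ (-(1 + (l : ℝ)) / 2) *
            (2 * (2 * (Real.sqrt t) ^ (2 - α) / (2 - α)) +
              Real.sqrt (Real.pi * 8) * Real.sqrt t * (Real.sqrt t) ^ (-(α - 1))) := by
            apply mul_le_mul_of_nonneg_left _ (by positivity)
            apply add_le_add
            · linarith
            · exact mul_le_mul_of_nonneg_left e2 (by positivity)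
        _ = M * (4 / (2 - α) + Real.sqrt (Real.pi * 8)) *
            t ^ (-(α - 1) / 2 - (l : ℝ) / 2) := by
            rw [hsa (2 - α), hsa (-(α - 1)), hs12]
            rw [show -(α - 1) / 2 = (-(α - 1)) / 2 by ring] at m2 ⊢
            linear_combination (4 / (2 - α) * M) * m1 + (Real.sqrt (Real.pi * 8) * M) * m2
        _ ≤ M * (4 / (2 - α) + Real.sqrt (Real.pi * 8)) *
            (2 ^ ((α - 1) / 2 + (l : ℝ) / 2) * (1 + t) ^ (-(α - 1) / 2 - (l : ℝ) / 2)) := by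
            apply mul_le_mul_of_nonneg_left hpow
            exact mul_nonneg hM.le
              (add_nonneg (div_pos (by norm_num) h2α).le (Real.sqrt_nonneg _))
        _ = M * (4 / (2 - α) + Real.sqrt (Real.pi * 8)) * 2 ^ ((α - 1) / 2 + (l : ℝ) / 2) *
            (1 + t) ^ (-(α - 1) / 2 - (l : ℝ) / 2) := by ring
    · exact fun h => absurd h (ne_of_lt hlt)
  · -- case α = 2
    subst heq
    obtain ⟨M, hM, hkey⟩ := Stmt11Aux.key (2 - 1) (by norm_num) (by norm_num) l
    refine ⟨M * (2 + Real.sqrt (Real.pi * 8)) * 2 ^ ((1 + (l : ℝ)) / 2), ?_, fun t ht x => ?_⟩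
    · exact mul_pos (mul_pos hM (by positivity)) (Real.rpow_pos_of_pos (by norm_num) _)
    constructor
    · exact fun h => absurd h (lt_irrefl 2)
    · intro _
      have ht0 : (0:ℝ) < t := lt_of_lt_of_le one_pos ht
      have hs0 : (0:ℝ) < Real.sqrt t := Real.sqrt_pos.mpr ht0
      have hs1 : (1:ℝ) ≤ Real.sqrt t := by
        rw [show (1:ℝ) = Real.sqrt 1 by simp]
        exact Real.sqrt_le_sqrt ht
      have hsq : (Real.sqrt t) ^ 2 = t := Real.sq_sqrt ht0.le
      have hst : Real.sqrt t ≤ t := by nlinarith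
      have hlog1 : (1:ℝ) ≤ Real.log (2 + t) := by
        rw [Real.le_log_iff_exp_le (by linarith)]
        have := Real.exp_one_lt_d9
        linarith
      have hlog0 : (0:ℝ) ≤ Real.log (2 + t) := by linarith
      have hshift : (∫ u in (0:ℝ)..(Real.sqrt t), (1 + u) ^ (-(2 - 1) : ℝ)) =
          ∫ u in (1:ℝ)..(1 + Real.sqrt t), u ^ (-(2 - 1) : ℝ) := by
        have h := intervalIntegral.integral_comp_add_left (a := 0) (b := Real.sqrt t)
          (fun u : ℝ => u ^ (-(2 - 1) : ℝ)) 1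
        simpa using h
      have hcong : (∫ u in (1:ℝ)..(1 + Real.sqrt t), u ^ (-(2 - 1) : ℝ)) =
          ∫ u in (1:ℝ)..(1 + Real.sqrt t), u⁻¹ := by
        apply intervalIntegral.integral_congr
        intro u _
        show u ^ (-(2 - 1) : ℝ) = u⁻¹
        rw [show (-(2 - 1) : ℝ) = -1 by norm_num, Real.rpow_neg_one]
      have hinv : (∫ u in (1:ℝ)..(1 + Real.sqrt t), u⁻¹) = Real.log (1 + Real.sqrt t) := by
        rw [integral_inv (by
          rw [Set.uIcc_of_le (by linarith : (1:ℝ) ≤ 1 + Real.sqrt t)]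
          rintro ⟨h0, -⟩
          linarith), div_one]
      have hIb : (∫ u in (0:ℝ)..(Real.sqrt t), (1 + u) ^ (-(2 - 1) : ℝ)) ≤
          Real.log (2 + t) := by
        rw [hshift, hcong, hinv]
        exact Real.log_le_log (by linarith) (by linarith)
      have houtb : Real.sqrt (Real.pi * 8) * Real.sqrt t * (1 + Real.sqrt t) ^ (-(2 - 1) : ℝ) ≤
          Real.sqrt (Real.pi * 8) * Real.log (2 + t) := by
        rw [show (-(2 - 1) : ℝ) = -1 by norm_num, Real.rpow_neg_one]
        have h1 : Real.sqrt t * (1 + Real.sqrt t)⁻¹ ≤ 1 := by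
          rw [← div_eq_mul_inv, div_le_one (by linarith)]
          linarith
        calc Real.sqrt (Real.pi * 8) * Real.sqrt t * (1 + Real.sqrt t)⁻¹
            = Real.sqrt (Real.pi * 8) * (Real.sqrt t * (1 + Real.sqrt t)⁻¹) := by ring
          _ ≤ Real.sqrt (Real.pi * 8) * 1 :=
              mul_le_mul_of_nonneg_left h1 (Real.sqrt_nonneg _)
          _ ≤ Real.sqrt (Real.pi * 8) * Real.log (2 + t) := by
              apply mul_le_mul_of_nonneg_left hlog1 (Real.sqrt_nonneg _)
      have hpow : t ^ (-(1 + (l : ℝ)) / 2) ≤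
          2 ^ ((1 + (l : ℝ)) / 2) * (1 + t) ^ (-(1 + (l : ℝ)) / 2) := by
        have h := Stmt11Aux.rpow_one_add_le t ht (-(1 + (l : ℝ)) / 2) (by
          have hl : (0:ℝ) ≤ (l:ℝ) := Nat.cast_nonneg l
          linarith)
        rwa [show -(-(1 + (l : ℝ)) / 2) = (1 + (l : ℝ)) / 2 by ring] at h
      calc (∫ y : ℝ, |iteratedDeriv l (fun x' => heatG t (x' - y)) x| * (1 + |y|) ^ (-(2 - 1) : ℝ))
          ≤ M * t ^ (-(1 + (l : ℝ)) / 2) *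
            (2 * (∫ u in (0:ℝ)..(Real.sqrt t), (1 + u) ^ (-(2 - 1) : ℝ)) +
              Real.sqrt (Real.pi * 8) * Real.sqrt t * (1 + Real.sqrt t) ^ (-(2 - 1) : ℝ)) :=
            hkey t ht x
        _ ≤ M * t ^ (-(1 + (l : ℝ)) / 2) *
            (2 * Real.log (2 + t) + Real.sqrt (Real.pi * 8) * Real.log (2 + t)) := by
            apply mul_le_mul_of_nonneg_left _ (by positivity)
            exact add_le_add (by linarith) houtb
        _ = M * (2 + Real.sqrt (Real.pi * 8)) * t ^ (-(1 + (l : ℝ)) / 2) *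
            Real.log (2 + t) := by ring
        _ ≤ M * (2 + Real.sqrt (Real.pi * 8)) *
            (2 ^ ((1 + (l : ℝ)) / 2) * (1 + t) ^ (-(1 + (l : ℝ)) / 2)) * Real.log (2 + t) := by
            apply mul_le_mul_of_nonneg_right _ hlog0
            apply mul_le_mul_of_nonneg_left hpow (by positivity)
        _ = M * (2 + Real.sqrt (Real.pi * 8)) * 2 ^ ((1 + (l : ℝ)) / 2) *
            (1 + t) ^ (-(1:ℝ) / 2 - (l : ℝ) / 2) * Real.log (2 + t) := by
            rw [show (-(1:ℝ) / 2 - (l : ℝ) / 2) = -(1 + (l : ℝ)) / 2 by ring]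
            ring
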